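/- Let μ > −1/2 be real, n ∈ ℕ and x ∈ ℂ, with the convention H_{−1}^μ = 0. Then 2n H_{n−1}^μ(x) + (γ_μ(n+1)/((n+1) γ_μ(n))) H_{n+1}^μ(x) = 2x H_n^μ(x) (three-term recursion). -/

import Mathlib

open MeasureTheory
open scoped BigOperators Nat

/-- Generalized factorial `γ_μ(n)`: `γ_μ(0) = 1`,
`γ_μ(n+1) = (n + 1 + 2μ θ_{n+1}) γ_μ(n)` where `θ_k = 1` if `k` is odd, `0` if even. -/
noncomputable def genGamma (μ : ℝ) : ℕ → ℝ
  | 0 => 1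
  | n + 1 => ((n : ℝ) + 1 + 2 * μ * (if (n + 1) % 2 = 1 then (1 : ℝ) else 0)) * genGamma μ n

/-- Generalized exponential function `e_μ(z) = Σ_{n≥0} z^n / γ_μ(n)`. -/
noncomputable def genExp (μ : ℝ) (z : ℂ) : ℂ :=
  ∑' n : ℕ, z ^ n / (genGamma μ n : ℂ)

/-- Generalized Hermite polynomial
`H_n^μ(x) = n! Σ_{k=0}^{⌊n/2⌋} (-1)^k (2x)^{n-2k} / (k! γ_μ(n-2k))`. -/
noncomputable def genHermite (μ : ℝ) (n : ℕ) (x : ℂ) : ℂ :=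
  (n ! : ℂ) * ∑ k ∈ Finset.range (n / 2 + 1),
    (-1) ^ k * (2 * x) ^ (n - 2 * k) / ((k ! : ℂ) * ((genGamma μ (n - 2 * k) : ℝ) : ℂ))

/-- Dunkl operator `(D_μ f)(x) = f'(x) + (μ/x)(f(x) - f(-x))`. -/
noncomputable def dunkl (μ : ℝ) (f : ℝ → ℂ) (x : ℝ) : ℂ :=
  deriv f x + ((μ / x : ℝ) : ℂ) * (f x - f (-x))

/-- Euler beta function `B(a,b) = Γ(a)Γ(b)/Γ(a+b)`. -/
noncomputable def realBeta (a b : ℝ) : ℝ :=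
  Real.Gamma a * Real.Gamma b / Real.Gamma (a + b)

lemma genGamma_succ (μ : ℝ) (n : ℕ) :
    genGamma μ (n + 1)
      = ((n : ℝ) + 1 + 2 * μ * (if (n + 1) % 2 = 1 then (1 : ℝ) else 0)) * genGamma μ n := rfl

lemma genGamma_pos (μ : ℝ) (hμ : -(1/2) < μ) : ∀ n, 0 < genGamma μ n := by
  intro n
  induction n with
  | zero => simp [genGamma]
  | succ n ih =>
    rw [genGamma_succ]
    have h : (0:ℝ) < (n : ℝ) + 1 + 2 * μ * (if (n + 1) % 2 = 1 then (1 : ℝ) else 0) := by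
      have := Nat.cast_nonneg (α := ℝ) n
      split <;> nlinarith
    exact mul_pos h ih

lemma genGamma_key (μ : ℝ) (n k : ℕ) (h : 2 * k ≤ n) :
    genGamma μ (n + 1) * genGamma μ (n - 2 * k)
      = genGamma μ n * (genGamma μ (n + 1 - 2 * k) + 2 * k * genGamma μ (n - 2 * k)) := by
  obtain ⟨m, rfl⟩ := Nat.le.dest h
  have h1 : 2 * k + m - 2 * k = m := by omega
  have h2 : 2 * k + m + 1 - 2 * k = m + 1 := by omega
  rw [h1, h2, genGamma_succ, genGamma_succ]
  have h3 : (2 * k + m + 1) % 2 = (m + 1) % 2 := by omega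
  rw [h3]
  push_cast
  ring

lemma genGamma_even (μ : ℝ) (n : ℕ) (h : (n + 1) % 2 = 0) :
    genGamma μ (n + 1) = ((n : ℝ) + 1) * genGamma μ n := by
  rw [genGamma_succ, if_neg (by omega)]; ring

lemma alg_aux (nn mf Y A c d Ga Gb Q : ℂ) (hc : c ≠ 0) (hd : d ≠ 0)
    (hGa : Ga ≠ 0) (hGb : Gb ≠ 0) (hQ : Q * Gb = Ga + 2 * c * Gb) :
    2 * nn * mf * (Y * A / (d * Ga)) + nn * mf * Q * (Y * -1 * A / (c * d * Ga))
      = nn * mf * (Y * -1 * A / (c * d * Gb)) := by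
  have h1 : d * Ga ≠ 0 := mul_ne_zero hd hGa
  have h2 : c * d * Ga ≠ 0 := mul_ne_zero (mul_ne_zero hc hd) hGa
  have h3 : c * d * Gb ≠ 0 := mul_ne_zero (mul_ne_zero hc hd) hGb
  rw [← mul_div_assoc, ← mul_div_assoc, ← mul_div_assoc,
    div_add_div _ _ h1 h2, div_eq_div_iff (mul_ne_zero h1 h2) h3]
  linear_combination (-(nn * mf * Y * A * c * d * d * Ga)) * hQ

lemma aux_main (μ : ℝ) (hμ : -(1/2) < μ) (m n : ℕ) (hn : n = m + 1) (x : ℂ) :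
    2 * (n : ℂ) * genHermite μ m x +
        ((genGamma μ (n + 1) / (((n : ℝ) + 1) * genGamma μ n) : ℝ) : ℂ) *
          genHermite μ (n + 1) x
      = 2 * x * genHermite μ n x := by
  have hγ : ∀ p, (((genGamma μ p : ℝ)) : ℂ) ≠ 0 := fun p => by
    exact_mod_cast (genGamma_pos μ hμ p).ne'
  set T : ℕ → ℂ := fun k => if k = 0 then 0 else
    2 * (n : ℂ) * (m ! : ℂ) * ((-1) ^ (k - 1) * (2 * x) ^ (n + 1 - 2 * k) /
      (((k - 1)! : ℂ) * ((genGamma μ (n + 1 - 2 * k) : ℝ) : ℂ))) with hT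
  set S : ℕ → ℂ := fun k =>
    (n ! : ℂ) * ((genGamma μ (n + 1) / genGamma μ n : ℝ) : ℂ) *
      ((-1) ^ k * (2 * x) ^ (n + 1 - 2 * k) /
        ((k ! : ℂ) * ((genGamma μ (n + 1 - 2 * k) : ℝ) : ℂ))) with hS
  set R : ℕ → ℂ := fun k => if 2 * k ≤ n then
    (n ! : ℂ) * ((-1) ^ k * (2 * x) ^ (n + 1 - 2 * k) /
      ((k ! : ℂ) * ((genGamma μ (n - 2 * k) : ℝ) : ℂ))) else 0 with hR
  have h1 : 2 * (n : ℂ) * genHermite μ m x = ∑ k ∈ Finset.range ((n + 1) / 2 + 1), T k := by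
    rw [show (n + 1) / 2 + 1 = (m / 2 + 1) + 1 by omega, Finset.sum_range_succ']
    have hT0 : T 0 = 0 := if_pos rfl
    rw [hT0, add_zero, genHermite, Finset.mul_sum, Finset.mul_sum]
    refine Finset.sum_congr rfl fun j hj => ?_
    simp only [hT, if_neg (Nat.succ_ne_zero j), Nat.add_sub_cancel]
    rw [show n + 1 - 2 * (j + 1) = m - 2 * j by omega]
    ring
  have h2 : ((genGamma μ (n + 1) / (((n : ℝ) + 1) * genGamma μ n) : ℝ) : ℂ) *
      genHermite μ (n + 1) x = ∑ k ∈ Finset.range ((n + 1) / 2 + 1), S k := by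
    rw [genHermite, Finset.mul_sum, Finset.mul_sum]
    refine Finset.sum_congr rfl fun k hk => ?_
    simp only [hS]
    have hfac : (((n + 1)! : ℕ) : ℂ) = ((n : ℂ) + 1) * (n ! : ℂ) := by
      push_cast [Nat.factorial_succ]; ring
    have hne : ((n : ℂ) + 1) ≠ 0 := Nat.cast_add_one_ne_zero n
    have hcoef : (((genGamma μ (n + 1) : ℝ)) : ℂ) / (((n : ℂ) + 1) * ((genGamma μ n : ℝ) : ℂ))
        * (((n : ℂ) + 1) * (n ! : ℂ))
        = (n ! : ℂ) * ((((genGamma μ (n + 1) : ℝ)) : ℂ) / ((genGamma μ n : ℝ) : ℂ)) := by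
      field_simp [hne, hγ n]
    push_cast
    rw [hfac, ← mul_assoc]
    rw [hcoef]
  have h3 : 2 * x * genHermite μ n x = ∑ k ∈ Finset.range ((n + 1) / 2 + 1), R k := by
    rw [genHermite, Finset.mul_sum]
    rw [show ∑ k ∈ Finset.range ((n + 1) / 2 + 1), R k
        = ∑ k ∈ Finset.range (n / 2 + 1), R k by
      refine (Finset.sum_subset (Finset.range_subset_range.2 (by omega)) fun k hk hk' => ?_).symm
      simp only [Finset.mem_range] at hk hk'
      simp only [hR, if_neg (show ¬ 2 * k ≤ n by omega)]]
    rw [Finset.mul_sum]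
    refine Finset.sum_congr rfl fun k hk => ?_
    simp only [Finset.mem_range] at hk
    have h2k : 2 * k ≤ n := by omega
    simp only [hR, if_pos h2k]
    rw [show n + 1 - 2 * k = (n - 2 * k) + 1 by omega, pow_succ]
    ring
  have key : ∀ k ∈ Finset.range ((n + 1) / 2 + 1), T k + S k = R k := by
    intro k hk
    simp only [Finset.mem_range] at hk
    match k with
    | 0 =>
      simp only [hT, hS, hR, if_pos rfl, Nat.mul_zero, Nat.sub_zero, zero_add,
        if_pos (Nat.zero_le n), pow_zero, Nat.factorial_zero, Nat.cast_one, one_mul]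
      push_cast
      field_simp [hγ n, hγ (n + 1)]
    | j + 1 =>
      simp only [hT, hS, hR, if_neg (Nat.succ_ne_zero j), Nat.add_sub_cancel]
      have hnf : (n ! : ℂ) = (n : ℂ) * (m ! : ℂ) := by
        subst hn; push_cast [Nat.factorial_succ]; ring
      have hjf : (((j + 1)! : ℕ) : ℂ) = ((j : ℂ) + 1) * (j ! : ℂ) := by
        push_cast [Nat.factorial_succ]; ring
      have hjne : ((j : ℂ) + 1) ≠ 0 := Nat.cast_add_one_ne_zero j
      have hjfne : ((j ! : ℕ) : ℂ) ≠ 0 := by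
        exact_mod_cast Nat.cast_ne_zero.2 (Nat.factorial_ne_zero j)
      by_cases h2k : 2 * (j + 1) ≤ n
      · rw [if_pos h2k]
        have hkeyC : ((genGamma μ (n + 1) : ℝ) : ℂ) * ((genGamma μ (n - 2 * (j + 1)) : ℝ) : ℂ)
            = ((genGamma μ n : ℝ) : ℂ) * (((genGamma μ (n + 1 - 2 * (j + 1)) : ℝ) : ℂ)
              + 2 * ((j : ℂ) + 1) * ((genGamma μ (n - 2 * (j + 1)) : ℝ) : ℂ)) := by
          exact_mod_cast congrArg Complex.ofReal (genGamma_key μ n (j + 1) h2k)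
        have hQ : ((genGamma μ (n + 1) / genGamma μ n : ℝ) : ℂ)
              * ((genGamma μ (n - 2 * (j + 1)) : ℝ) : ℂ)
            = ((genGamma μ (n + 1 - 2 * (j + 1)) : ℝ) : ℂ)
              + 2 * ((j : ℂ) + 1) * ((genGamma μ (n - 2 * (j + 1)) : ℝ) : ℂ) := by
          push_cast
          rw [div_mul_eq_mul_div, div_eq_iff (hγ n)]
          linear_combination hkeyC
        rw [hnf, hjf]
        simp only [pow_succ]
        exact alg_aux (n : ℂ) (m ! : ℂ) ((-1) ^ j) ((2 * x) ^ (n + 1 - 2 * (j + 1)))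
          ((j : ℂ) + 1) ((j ! : ℕ) : ℂ) _ _ _ hjne hjfne (hγ _) (hγ _) hQ
      · rw [if_neg h2k]
        have hz : n + 1 - 2 * (j + 1) = 0 := by omega
        have heven : genGamma μ (n + 1) = ((n : ℝ) + 1) * genGamma μ n :=
          genGamma_even μ n (by omega)
        have hn1 : ((n : ℂ) + 1) = 2 * ((j : ℂ) + 1) := by
          have : n + 1 = 2 * (j + 1) := by omega
          exact_mod_cast congrArg (Nat.cast (R := ℂ)) this
        rw [hz, heven, hnf, hjf]
        have hg0 : genGamma μ 0 = 1 := rfl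
        rw [hg0]
        push_cast
        rw [hn1, pow_succ]
        field_simp [hγ n]
        ring
  rw [h1, h2, h3, ← Finset.sum_add_distrib]
  exact Finset.sum_congr rfl key

/-- Three-term recursion: for `μ > -1/2`, `n ∈ ℕ`, `x ∈ ℂ`
(with the convention `H_{-1}^μ = 0`, which is immaterial since the coefficient `2n`
vanishes when `n = 0`):
`2n H_{n-1}^μ(x) + (γ_μ(n+1)/((n+1)γ_μ(n))) H_{n+1}^μ(x) = 2x H_n^μ(x)`. -/
theorem genHermite_three_term_recursion (μ : ℝ) (hμ : -(1/2) < μ) (n : ℕ) (x : ℂ) :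
    2 * (n : ℂ) * genHermite μ (n - 1) x +
        ((genGamma μ (n + 1) / (((n : ℝ) + 1) * genGamma μ n) : ℝ) : ℂ) *
          genHermite μ (n + 1) x
      = 2 * x * genHermite μ n x := by
  match n with
  | 0 =>
    have hγ1 : (((genGamma μ 1 : ℝ)) : ℂ) ≠ 0 := by
      exact_mod_cast (genGamma_pos μ hμ 1).ne'
    have h0 : genGamma μ 0 = 1 := rfl
    simp [genHermite, Finset.sum_range_one, h0]
    field_simp
  | m + 1 =>
    exact aux_main μ hμ m (m + 1) rfl x
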